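/- Let m ⊆ R be a maximal ideal, and let g, h ∈ ℤ^n with σ_h(m) = m. Suppose a ∈ 𝒜(g) and b ∈ 𝒜(h) satisfy a^*·a ∈ ι(R) \ ι(m) and b^*·b ∈ ι(R) \ ι(m). Then, writing φ_m : A → A/(m) for the quotient map, the K-span of {φ_m(x)·φ_m(y) : x ∈ 𝒜(g), y ∈ 𝒜(h)} equals φ_m(𝒜(g+h)). -/
import Mathlib


/-- The quotient map `A → A/(s)` by the two-sided ideal generated by `s`, as a
morphism of `K`-algebras. -/
def quotAlgHom {K A : Type*} [Field K] [Ring A] [Algebra K A] (s : Set A) :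
    A →ₐ[K] (TwoSidedIdeal.span s).ringCon.Quotient :=
  AlgHom.mk' (TwoSidedIdeal.span s).ringCon.mk' fun _ _ => rfl


lemma quotAlgHom_zero {K A : Type*} [Field K] [Ring A] [Algebra K A] (s : Set A)
    {x : A} (hx : x ∈ s) : quotAlgHom (K := K) s x = 0 := by
  have hmem : x ∈ TwoSidedIdeal.span s := TwoSidedIdeal.subset_span hx
  rw [TwoSidedIdeal.mem_iff] at hmem
  show ((x : A) : (TwoSidedIdeal.span s).ringCon.Quotient) = _
  rw [show (0 : (TwoSidedIdeal.span s).ringCon.Quotient) = ((0 : A) : _) from rfl,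
    RingCon.eq]
  exact hmem

/-- Lemma `NBabc` part (b): with `m` maximal, `σ_h(m) = m`,
`a ∈ 𝒜 g`, `b ∈ 𝒜 h`, `a^*a ∉ ι(m)`, `b^*b ∉ ι(m)`, the `K`-span of
`{φ_m(x)·φ_m(y) : x ∈ 𝒜 g, y ∈ 𝒜 h}` equals `φ_m(𝒜 (g+h))` in `A/(m)`. -/
theorem stmt_17 {K A R : Type*} [Field K] [Ring A] [Algebra K A]
    [CommRing R] [Algebra K R]
    (n : ℕ) (hn : 1 ≤ n)
    (𝒜 : (Fin n → ℤ) → Submodule K A)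
    (hdirect : DirectSum.IsInternal 𝒜)
    (hone : (1 : A) ∈ 𝒜 0)
    (hgmul : ∀ g h : Fin n → ℤ, ∀ a ∈ 𝒜 g, ∀ b ∈ 𝒜 h, a * b ∈ 𝒜 (g + h))
    (ι : R →ₐ[K] A) (hinj : Function.Injective ι)
    (hrange : (𝒜 0 : Set A) = Set.range ι)
    (σ : (Fin n → ℤ) → (R ≃ₐ[K] R))
    (hσ : ∀ g h : Fin n → ℤ, σ (g + h) = σ g * σ h)
    (hcomm : ∀ g : Fin n → ℤ, ∀ a ∈ 𝒜 g, ∀ r : R, a * ι r = ι (σ g r) * a)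
    (st : A →ₗ[K] A)
    (hst_mul : ∀ x y : A, st (x * y) = st y * st x)
    (hst_invol : ∀ x : A, st (st x) = x)
    (hst_grade : ∀ g : Fin n → ℤ, ∀ a ∈ 𝒜 g, st a ∈ 𝒜 (-g))
    (hst_R : ∀ r : R, st (ι r) = ι r)
    (m : Ideal R) (hm : m.IsMaximal)
    (g h : Fin n → ℤ) (hfix : Ideal.map (σ h) m = m)
    (a : A) (ha : a ∈ 𝒜 g) (haa : st a * a ∈ Set.range ⇑ι \ ⇑ι '' ↑m)
    (b : A) (hb : b ∈ 𝒜 h) (hbb : st b * b ∈ Set.range ⇑ι \ ⇑ι '' ↑m) :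
    Submodule.span K {z : (TwoSidedIdeal.span (⇑ι '' ↑m)).ringCon.Quotient |
        ∃ x ∈ 𝒜 g, ∃ y ∈ 𝒜 h,
          z = quotAlgHom (K := K) (⇑ι '' ↑m) x * quotAlgHom (K := K) (⇑ι '' ↑m) y}
      = Submodule.map (quotAlgHom (K := K) (A := A) (⇑ι '' ↑m)).toLinearMap
          (𝒜 (g + h)) := by

  set s : Set A := ⇑ι '' ↑m with hs
  set φ := quotAlgHom (K := K) (A := A) s with hφ
  apply le_antisymm
  · rw [Submodule.span_le]
    rintro z ⟨x, hx, y, hy, rfl⟩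
    exact ⟨x * y, hgmul g h x hx y hy, map_mul φ x y⟩
  · rintro z ⟨c, hc, rfl⟩
    -- extract t with ι t = st b * b, t ∉ m
    obtain ⟨⟨t, ht⟩, hnot⟩ := hbb
    have htm : t ∉ m := fun htm => hnot ⟨t, htm, ht⟩
    obtain ⟨t', i, him, hti⟩ := hm.exists_inv htm
    -- x := c * st b * ι (σ h t')
    set x : A := c * st b * ι (σ h t') with hx
    have hxg : x ∈ 𝒜 g := by
      have h1 : c * st b ∈ 𝒜 (g + h + -h) :=
        hgmul (g + h) (-h) c hc (st b) (hst_grade h b hb)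
      have h2 : ι (σ h t') ∈ 𝒜 0 := by
        rw [SetLike.mem_coe.symm, hrange]; exact ⟨σ h t', rfl⟩
      have h3 : x ∈ 𝒜 (g + h + -h + 0) :=
        hgmul (g + h + -h) 0 _ h1 _ h2
      have he : (g + h + -h + 0 : Fin n → ℤ) = g := by abel
      rwa [he] at h3
    have hxb : x * b = c * ι (t * t') := by
      have hcm : b * ι t' = ι (σ h t') * b := hcomm h b hb t'
      calc x * b = c * st b * (ι (σ h t') * b) := by rw [hx]; noncomm_ring
        _ = c * st b * (b * ι t') := by rw [hcm]
        _ = c * (st b * b) * ι t' := by noncomm_ring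
        _ = c * (ι t * ι t') := by rw [ht]; noncomm_ring
        _ = c * ι (t * t') := by rw [map_mul]
    have hw : t * t' - 1 ∈ m := by
      have heq : t * t' - 1 = -i := by linear_combination hti
      rw [heq]; exact m.neg_mem him
    have key : φ x * φ b = φ.toLinearMap c := by
      have : ι (t * t') = 1 + ι (t * t' - 1) := by
        rw [map_sub, map_one]; abel
      have hzero : φ (ι (t * t' - 1)) = 0 :=
        quotAlgHom_zero s ⟨t * t' - 1, hw, rfl⟩
      calc φ x * φ b = φ (x * b) := (map_mul φ x b).symm
        _ = φ (c * ι (t * t')) := by rw [hxb]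
        _ = φ c * φ (ι (t * t')) := map_mul φ _ _
        _ = φ c * (1 + φ (ι (t * t' - 1))) := by
              rw [this, map_add, map_one]
        _ = φ c := by rw [hzero, add_zero, mul_one]
        _ = φ.toLinearMap c := rfl
    rw [← key]
    exact Submodule.subset_span ⟨x, hxg, b, hb, rfl⟩
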